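/- Consider the action of ℤ/2ℤ on ℝ² by coordinate swap: 1·(u,v) = (v,u). Let L = {(u,u) : u ∈ ℝ}, HP_A = {(u,v) : v > u}, HP_B = {(u,v) : v < u}. Let X be a random variable in ℝ² with E‖X‖² < ∞ and t₀ = E(X) ∈ HP_A ∪ L. Define Z = X·1_{X ∈ HP_A ∪ L} + (1·X)·1_{X ∈ HP_B}. Then E(Z) = E(X) if and only if P(X ∈ HP_B) = 0. In particular, if t₀ ∈ HP_A, then [t₀] is a Fréchet mean of [X] in ℝ²/(ℤ/2ℤ) if and only if the support of X is included in HP_A ∪ L. -/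

import Mathlib

open MeasureTheory Metric

local notation "E2" => EuclideanSpace ℝ (Fin 2)

lemma normsq17 (y : E2) : ‖y‖^2 = y 0^2 + y 1^2 := by
  rw [EuclideanSpace.norm_eq, Real.sq_sqrt (by positivity)]
  simp [Fin.sum_univ_two, sq_abs]

lemma le_of_sq_le17 {a b : ℝ} (hb : 0 ≤ b) (h : a^2 ≤ b^2) : a ≤ b := by nlinarith

lemma coord_le17 (y : E2) (i : Fin 2) : |y i| ≤ ‖y‖ := by
  refine le_of_sq_le17 (norm_nonneg _) ?_
  rw [sq_abs, normsq17 y]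
  fin_cases i
  · show y 0 ^ 2 ≤ _; nlinarith [sq_nonneg (y 1)]
  · show y 1 ^ 2 ≤ _; nlinarith [sq_nonneg (y 0)]

noncomputable def sL17 : E2 ≃ₗᵢ[ℝ] E2 :=
  LinearIsometryEquiv.piLpCongrLeft 2 ℝ ℝ (Equiv.swap (0:Fin 2) 1)

lemma sL17_apply (x : E2) (i : Fin 2) : sL17 x i = x (Equiv.swap (0:Fin 2) 1 i) := by
  simp [sL17, Equiv.piCongrLeft'_apply, Equiv.symm_apply_eq]

lemma swap_eq17 {swap : E2 → E2} (hswap : ∀ x : E2, swap x 0 = x 1 ∧ swap x 1 = x 0) :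
    swap = ⇑sL17 := by
  funext x; ext i
  rw [sL17_apply]
  fin_cases i
  · show swap x 0 = x (Equiv.swap (0:Fin 2) 1 0)
    rw [Equiv.swap_apply_left]; exact (hswap x).1
  · show swap x 1 = x (Equiv.swap (0:Fin 2) 1 1)
    rw [Equiv.swap_apply_right]; exact (hswap x).2

lemma swap_norm_sub17 {swap : E2 → E2} (hswap : ∀ x : E2, swap x 0 = x 1 ∧ swap x 1 = x 0)
    (a b : E2) : ‖swap a - swap b‖ = ‖a - b‖ := by
  rw [swap_eq17 hswap, ← map_sub]; exact sL17.norm_map _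

lemma swap_norm17 {swap : E2 → E2} (hswap : ∀ x : E2, swap x 0 = x 1 ∧ swap x 1 = x 0)
    (a : E2) : ‖swap a‖ = ‖a‖ := by
  rw [swap_eq17 hswap]; exact sL17.norm_map a

lemma swap_swap17 {swap : E2 → E2} (hswap : ∀ x : E2, swap x 0 = x 1 ∧ swap x 1 = x 0)
    (x : E2) : swap (swap x) = x := by
  ext i; fin_cases i
  · show swap (swap x) 0 = x 0
    rw [(hswap (swap x)).1, (hswap x).2]
  · show swap (swap x) 1 = x 1
    rw [(hswap (swap x)).2, (hswap x).1]

lemma key17 {swap : E2 → E2} (hswap : ∀ x : E2, swap x 0 = x 1 ∧ swap x 1 = x 0)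
    (m x : E2) (hm : m 0 ≤ m 1) :
    min ‖x - m‖ ‖swap x - m‖ = ‖(if x 1 < x 0 then swap x else x) - m‖ := by
  have e1 : ‖x - m‖^2 = (x 0 - m 0)^2 + (x 1 - m 1)^2 := by
    rw [normsq17]; simp [PiLp.sub_apply]
  have e2 : ‖swap x - m‖^2 = (x 1 - m 0)^2 + (x 0 - m 1)^2 := by
    rw [normsq17]; simp [PiLp.sub_apply, (hswap x).1, (hswap x).2]
  split_ifs with h
  · refine min_eq_right (le_of_sq_le17 (norm_nonneg _) ?_)
    rw [e1, e2]; nlinarith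
  · push_neg at h
    refine min_eq_left (le_of_sq_le17 (norm_nonneg _) ?_)
    rw [e1, e2]; nlinarith

lemma swap_min17 {swap : E2 → E2} (hswap : ∀ x : E2, swap x 0 = x 1 ∧ swap x 1 = x 0)
    (m x : E2) :
    min ‖x - m‖ ‖swap x - m‖ = min ‖x - swap m‖ ‖swap x - swap m‖ := by
  have e1 : ‖x - m‖ = ‖swap x - swap m‖ := (swap_norm_sub17 hswap x m).symm
  have e2 : ‖swap x - m‖ = ‖x - swap m‖ := by
    calc ‖swap x - m‖ = ‖swap x - swap (swap m)‖ := by rw [swap_swap17 hswap]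
    _ = ‖x - swap m‖ := swap_norm_sub17 hswap _ _
  rw [e1, e2, min_comm]

set_option maxHeartbeats 1000000 in
/-- Action of `ℤ/2ℤ` on `ℝ²` by coordinate swap. With
`L = {x0 = x1}`, `HP_A = {x0 < x1}`, `HP_B = {x1 < x0}`,
`t₀ = E(X) ∈ HP_A ∪ L` and `Z = X·1_{X ∈ HP_A ∪ L} + (swap X)·1_{X ∈ HP_B}`:
`E(Z) = E(X)` iff `P(X ∈ HP_B) = 0`; and if `t₀ ∈ HP_A`, `[t₀]` is a Fréchet
mean of `[X]` iff the support of `X` is contained in `HP_A ∪ L`. -/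
theorem stmt17 {Ω : Type*} [MeasurableSpace Ω] (μ : Measure Ω)
    [IsProbabilityMeasure μ]
    (swap : EuclideanSpace ℝ (Fin 2) → EuclideanSpace ℝ (Fin 2))
    (hswap : ∀ x : EuclideanSpace ℝ (Fin 2), swap x 0 = x 1 ∧ swap x 1 = x 0)
    (X : Ω → EuclideanSpace ℝ (Fin 2))
    (hX2 : Integrable (fun ω => ‖X ω‖ ^ 2) μ)
    (hXint : Integrable X μ)
    (t₀ : EuclideanSpace ℝ (Fin 2))
    (hmean : ∫ ω, X ω ∂μ = t₀)
    (ht₀ : t₀ 0 ≤ t₀ 1) :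
    ((∫ ω, (if X ω 1 < X ω 0 then swap (X ω) else X ω) ∂μ) = t₀ ↔
      μ {ω | X ω 1 < X ω 0} = 0) ∧
    (t₀ 0 < t₀ 1 →
      ((∀ m : EuclideanSpace ℝ (Fin 2),
          (∫ ω, (min ‖X ω - t₀‖ ‖swap (X ω) - t₀‖) ^ 2 ∂μ)
            ≤ ∫ ω, (min ‖X ω - m‖ ‖swap (X ω) - m‖) ^ 2 ∂μ) ↔
        (∀ x : EuclideanSpace ℝ (Fin 2),
          (∀ r > 0, 0 < μ {ω | X ω ∈ Metric.ball x r}) → x 0 ≤ x 1))) := by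
  classical
  have hXaesm : AEStronglyMeasurable X μ := hXint.aestronglyMeasurable
  obtain ⟨g, hgsm, hXg⟩ := hXaesm
  have hXaesm : AEStronglyMeasurable X μ := hXint.aestronglyMeasurable
  have hgmeas : Measurable g := hgsm.measurable
  have hXgnull : μ {ω | X ω ≠ g ω} = 0 := ae_iff.mp hXg
  set Z : Ω → EuclideanSpace ℝ (Fin 2) :=
    fun ω => if X ω 1 < X ω 0 then swap (X ω) else X ω with hZdef
  have hZmeas : AEStronglyMeasurable Z μ := by
    refine ⟨fun ω => if g ω 1 < g ω 0 then sL17 (g ω) else g ω, ?_, ?_⟩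
    · have h1 : Measurable fun ω => g ω 1 :=
        (EuclideanSpace.proj (1:Fin 2)).continuous.measurable.comp hgmeas
      have h0 : Measurable fun ω => g ω 0 :=
        (EuclideanSpace.proj (0:Fin 2)).continuous.measurable.comp hgmeas
      exact (Measurable.ite (measurableSet_lt h1 h0)
        (sL17.continuous.measurable.comp hgmeas) hgmeas).stronglyMeasurable
    · filter_upwards [hXg] with ω hω
      show (if X ω 1 < X ω 0 then swap (X ω) else X ω) = _
      rw [hω, swap_eq17 hswap]
  have hnormZ : ∀ ω, ‖Z ω‖ = ‖X ω‖ := by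
    intro ω
    show ‖(if X ω 1 < X ω 0 then swap (X ω) else X ω)‖ = _
    split_ifs
    · exact swap_norm17 hswap _
    · rfl
  have hZint : Integrable Z μ :=
    Integrable.mono' hXint.norm hZmeas (Filter.Eventually.of_forall fun ω => (hnormZ ω).le)
  have compInt : ∀ (W : Ω → EuclideanSpace ℝ (Fin 2)), Integrable W μ →
      ∀ i : Fin 2, Integrable (fun ω => W ω i) μ :=
    fun W hW i => by simpa [PiLp.proj_apply] using (EuclideanSpace.proj (𝕜 := ℝ) i).integrable_comp hW
  have compEq : ∀ (W : Ω → EuclideanSpace ℝ (Fin 2)), Integrable W μ →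
      ∀ i : Fin 2, ∫ ω, W ω i ∂μ = (∫ ω, W ω ∂μ) i :=
    fun W hW i => by simpa [PiLp.proj_apply] using (EuclideanSpace.proj (𝕜 := ℝ) i).integral_comp_comm hW
  have hB : ∀ ω, X ω 1 < X ω 0 → Z ω 0 - X ω 0 = X ω 1 - X ω 0 := by
    intro ω h
    show (if X ω 1 < X ω 0 then swap (X ω) else X ω) 0 - X ω 0 = _
    rw [if_pos h, (hswap (X ω)).1]
  have hnB : ∀ ω, ¬ X ω 1 < X ω 0 → Z ω 0 - X ω 0 = 0 := by
    intro ω h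
    show (if X ω 1 < X ω 0 then swap (X ω) else X ω) 0 - X ω 0 = _
    rw [if_neg h, sub_self]
  have part1 : (∫ ω, Z ω ∂μ) = t₀ ↔ μ {ω | X ω 1 < X ω 0} = 0 := by
    constructor
    · intro h
      set φ : Ω → ℝ := fun ω => Z ω 0 - X ω 0 with hφdef
      have hφint : Integrable φ μ := (compInt Z hZint 0).sub (compInt X hXint 0)
      have hφ0 : ∫ ω, φ ω ∂μ = 0 := by
        rw [integral_sub (compInt Z hZint 0) (compInt X hXint 0), compEq Z hZint 0,
          compEq X hXint 0, h, hmean, sub_self]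
      have hφle : ∀ ω, φ ω ≤ 0 := by
        intro ω
        by_cases hc : X ω 1 < X ω 0
        · rw [show φ ω = X ω 1 - X ω 0 from hB ω hc]; linarith
        · rw [show φ ω = 0 from hnB ω hc]
      have hae : ∀ᵐ ω ∂μ, φ ω = 0 := by
        have h1 : ∫ ω, -φ ω ∂μ = 0 := by rw [integral_neg, hφ0, neg_zero]
        have h2 := (integral_eq_zero_iff_of_nonneg
          (fun ω => neg_nonneg.2 (hφle ω)) hφint.neg).1 h1
        filter_upwards [h2] with ω hω
        have h3 : -φ ω = 0 := hω
        linarith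
      refine measure_mono_null ?_ (ae_iff.mp hae)
      intro ω hω
      simp only [Set.mem_setOf_eq] at hω ⊢
      show ¬ (Z ω 0 - X ω 0) = 0
      rw [hB ω hω]
      intro hcon; linarith
    · intro h
      have hZX : Z =ᵐ[μ] X := by
        refine ae_iff.mpr (measure_mono_null ?_ h)
        intro ω hω
        simp only [Set.mem_setOf_eq] at hω ⊢
        by_contra hc
        exact hω (if_neg hc)
      rw [integral_congr_ae hZX, hmean]
  refine ⟨part1, fun hst => ?_⟩
  set EZ : EuclideanSpace ℝ (Fin 2) := ∫ ω, Z ω ∂μ with hEZdef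
  have hZ01 : ∀ ω, Z ω 0 ≤ Z ω 1 := by
    intro ω
    show (if X ω 1 < X ω 0 then swap (X ω) else X ω) 0 ≤
      (if X ω 1 < X ω 0 then swap (X ω) else X ω) 1
    split_ifs with hc
    · rw [(hswap (X ω)).1, (hswap (X ω)).2]; linarith
    · push_neg at hc; exact hc
  have hEZ01 : EZ 0 ≤ EZ 1 := by
    rw [hEZdef, ← compEq Z hZint 0, ← compEq Z hZint 1]
    exact integral_mono (compInt Z hZint 0) (compInt Z hZint 1) hZ01
  have hminaesm : ∀ m : EuclideanSpace ℝ (Fin 2),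
      AEStronglyMeasurable (fun ω => (min ‖X ω - m‖ ‖swap (X ω) - m‖)^2) μ := by
    intro m
    have h1 : AEStronglyMeasurable (fun ω => sL17 (X ω)) μ :=
      sL17.continuous.comp_aestronglyMeasurable hXaesm
    have h2 : AEMeasurable (fun ω => min ‖X ω - m‖ ‖sL17 (X ω) - m‖) μ :=
      ((hXaesm.sub aestronglyMeasurable_const).norm.aemeasurable).min
        ((h1.sub aestronglyMeasurable_const).norm.aemeasurable)
    have h3 := ((h2.mul h2).aestronglyMeasurable)
    rw [swap_eq17 hswap]
    simpa [pow_two, Pi.mul_def] using h3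
  have hminint : ∀ m : EuclideanSpace ℝ (Fin 2),
      Integrable (fun ω => (min ‖X ω - m‖ ‖swap (X ω) - m‖)^2) μ := by
    intro m
    have hgint : Integrable (fun ω => ‖X ω‖^2 + 2*‖m‖*‖X ω‖ + ‖m‖^2) μ := by
      exact (hX2.add (hXint.norm.const_mul (2*‖m‖))).add (integrable_const (‖m‖^2))
    refine Integrable.mono' hgint (hminaesm m) (Filter.Eventually.of_forall fun ω => ?_)
    have h1 : 0 ≤ min ‖X ω - m‖ ‖swap (X ω) - m‖ := le_min (norm_nonneg _) (norm_nonneg _)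
    have h2 : min ‖X ω - m‖ ‖swap (X ω) - m‖ ≤ ‖X ω‖ + ‖m‖ :=
      (min_le_left _ _).trans (norm_sub_le _ _)
    rw [Real.norm_eq_abs, abs_of_nonneg (sq_nonneg _)]
    nlinarith [norm_nonneg (X ω), norm_nonneg m]
  have hZEaesm : AEStronglyMeasurable (fun ω => Z ω - EZ) μ := hZmeas.sub aestronglyMeasurable_const
  have hZEsq : Integrable (fun ω => ‖Z ω - EZ‖^2) μ := by
    have hgint : Integrable (fun ω => ‖X ω‖^2 + 2*‖EZ‖*‖X ω‖ + ‖EZ‖^2) μ := by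
      exact (hX2.add (hXint.norm.const_mul (2*‖EZ‖))).add (integrable_const (‖EZ‖^2))
    refine Integrable.mono' hgint
      (by simpa [pow_two, Pi.mul_def] using (hZEaesm.norm.aemeasurable.mul hZEaesm.norm.aemeasurable).aestronglyMeasurable)
      (Filter.Eventually.of_forall fun ω => ?_)
    have h2 : ‖Z ω - EZ‖ ≤ ‖X ω‖ + ‖EZ‖ := by
      have := norm_sub_le (Z ω) EZ
      rw [hnormZ ω] at this; exact this
    rw [Real.norm_eq_abs, abs_of_nonneg (sq_nonneg _)]
    nlinarith [norm_nonneg (X ω), norm_nonneg EZ, norm_nonneg (Z ω - EZ)]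
  have hinner : ∀ c : EuclideanSpace ℝ (Fin 2),
      Integrable (fun ω => (inner ℝ (Z ω - EZ) c : ℝ)) μ := by
    intro c
    have hgint : Integrable (fun ω => (‖X ω‖ + ‖EZ‖) * ‖c‖) μ := by
      exact (hXint.norm.add (integrable_const ‖EZ‖)).mul_const ‖c‖
    refine Integrable.mono' hgint
      (AEStronglyMeasurable.inner (𝕜 := ℝ) hZEaesm aestronglyMeasurable_const)
      (Filter.Eventually.of_forall fun ω => ?_)
    have h1 : |(inner ℝ (Z ω - EZ) c : ℝ)| ≤ ‖Z ω - EZ‖ * ‖c‖ := abs_real_inner_le_norm _ _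
    have h2 : ‖Z ω - EZ‖ ≤ ‖X ω‖ + ‖EZ‖ := by
      have := norm_sub_le (Z ω) EZ
      rw [hnormZ ω] at this; exact this
    rw [Real.norm_eq_abs]
    calc |(inner ℝ (Z ω - EZ) c : ℝ)| ≤ ‖Z ω - EZ‖ * ‖c‖ := h1
      _ ≤ (‖X ω‖ + ‖EZ‖) * ‖c‖ := by
        exact mul_le_mul_of_nonneg_right h2 (norm_nonneg c)
  have hZEint : Integrable (fun ω => Z ω - EZ) μ := hZint.sub (integrable_const EZ)
  have hZE0 : ∫ ω, (Z ω - EZ) ∂μ = 0 := by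
    rw [integral_sub hZint (integrable_const EZ), integral_const]
    simp [hEZdef]
  have hinner0 : ∀ c : EuclideanSpace ℝ (Fin 2),
      ∫ ω, (inner ℝ (Z ω - EZ) c : ℝ) ∂μ = 0 := by
    intro c
    have h1 : ∀ ω, (inner ℝ (Z ω - EZ) c : ℝ) = inner ℝ c (Z ω - EZ) :=
      fun ω => real_inner_comm _ _
    rw [integral_congr_ae (Filter.Eventually.of_forall h1), integral_inner hZEint c, hZE0,
      inner_zero_right]
  have hiden : ∀ m : EuclideanSpace ℝ (Fin 2), m 0 ≤ m 1 →
      ∫ ω, (min ‖X ω - m‖ ‖swap (X ω) - m‖)^2 ∂μ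
        = (∫ ω, ‖Z ω - EZ‖^2 ∂μ) + ‖m - EZ‖^2 := by
    intro m hm
    have hptwise : ∀ ω, (min ‖X ω - m‖ ‖swap (X ω) - m‖)^2
        = ‖Z ω - EZ‖^2 + ((2 : ℝ) * inner ℝ (Z ω - EZ) (EZ - m) + ‖EZ - m‖^2) := by
      intro ω
      rw [key17 hswap m (X ω) hm]
      show ‖Z ω - m‖^2 = _
      have hrw : Z ω - m = (Z ω - EZ) + (EZ - m) := by abel
      rw [hrw, norm_add_sq_real]; ring
    have hg1 : Integrable (fun ω => (2:ℝ) * inner ℝ (Z ω - EZ) (EZ - m) + ‖EZ - m‖^2) μ := by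
      exact ((hinner (EZ - m)).const_mul 2).add (integrable_const _)
    have hg2 : Integrable (fun ω => (2:ℝ) * inner ℝ (Z ω - EZ) (EZ - m)) μ := by
      exact (hinner (EZ - m)).const_mul 2
    rw [integral_congr_ae (Filter.Eventually.of_forall hptwise),
      integral_add hZEsq hg1, integral_add hg2 (integrable_const _),
      integral_const_mul, hinner0, integral_const]
    simp [norm_sub_rev EZ m]
  have main : ∀ m : EuclideanSpace ℝ (Fin 2), EZ = t₀ → m 0 ≤ m 1 →
      (∫ ω, (min ‖X ω - t₀‖ ‖swap (X ω) - t₀‖)^2 ∂μ)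
        ≤ ∫ ω, (min ‖X ω - m‖ ‖swap (X ω) - m‖)^2 ∂μ := by
    intro m hEZt hm
    rw [hiden m hm, hiden t₀ ht₀, hEZt]
    simp only [sub_self, norm_zero, add_zero]
    nlinarith [sq_nonneg ‖m - t₀‖, norm_nonneg (m - t₀)]
  constructor
  · intro hF
    have h1 := hF EZ
    rw [hiden EZ hEZ01, hiden t₀ ht₀] at h1
    have h2 : ‖t₀ - EZ‖^2 ≤ 0 := by simpa using h1
    have ht0EZ : EZ = t₀ := by
      have h3 : ‖t₀ - EZ‖ = 0 := by nlinarith [norm_nonneg (t₀ - EZ)]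
      exact (sub_eq_zero.mp (norm_eq_zero.mp h3)).symm
    have hB0 : μ {ω | X ω 1 < X ω 0} = 0 := part1.mp ht0EZ
    intro x hx
    by_contra hxc
    push_neg at hxc
    set r := (x 0 - x 1)/2 with hr
    have hrpos : 0 < r := by rw [hr]; linarith
    have hsub : {ω | X ω ∈ Metric.ball x r} ⊆ {ω | X ω 1 < X ω 0} := by
      intro ω hω
      simp only [Set.mem_setOf_eq, Metric.mem_ball, dist_eq_norm] at hω ⊢
      have hc0 : |X ω 0 - x 0| < r := by
        have := coord_le17 (X ω - x) 0
        simp only [PiLp.sub_apply] at this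
        linarith
      have hc1 : |X ω 1 - x 1| < r := by
        have := coord_le17 (X ω - x) 1
        simp only [PiLp.sub_apply] at this
        linarith
      have h4 := abs_lt.mp hc0
      have h5 := abs_lt.mp hc1
      have hre : r = (x 0 - x 1)/2 := hr
      linarith [h4.1, h5.2]
    exact (hx r hrpos).ne' (measure_mono_null hsub hB0)
  · intro hsupp
    have hB0 : μ {ω | X ω 1 < X ω 0} = 0 := by
      set U : Set (EuclideanSpace ℝ (Fin 2)) := {y | y 1 < y 0} with hU
      have hUopen : IsOpen U :=
        isOpen_lt (EuclideanSpace.proj (1:Fin 2)).continuous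
          (EuclideanSpace.proj (0:Fin 2)).continuous
      have hkey : ∀ s : Set (EuclideanSpace ℝ (Fin 2)), MeasurableSet s →
          μ {ω | X ω ∈ s} = 0 → μ.map g s = 0 := by
        intro s hs h0
        rw [Measure.map_apply hgmeas hs]
        refine measure_mono_null ?_ (measure_union_null h0 hXgnull)
        intro ω hω
        by_cases hc : X ω = g ω
        · left; simp only [Set.mem_setOf_eq]; rw [hc]; exact hω
        · right; exact hc
      have hloc : ∀ y ∈ U, ∃ u ∈ nhdsWithin y U, μ.map g u = 0 := by
        intro y hy
        have hy' : y 1 < y 0 := hy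
        have hno : ¬ (∀ r > 0, 0 < μ {ω | X ω ∈ Metric.ball y r}) := by
          intro hcon
          exact absurd (hsupp y hcon) (by simpa using hy')
        push_neg at hno
        obtain ⟨r, hrpos, hr0⟩ := hno
        have hr0' : μ {ω | X ω ∈ Metric.ball y r} = 0 :=
          nonpos_iff_eq_zero.mp hr0
        exact ⟨Metric.ball y r, nhdsWithin_le_nhds (Metric.ball_mem_nhds y hrpos),
          hkey _ measurableSet_ball hr0'⟩
      have hUmap : μ.map g U = 0 := measure_null_of_locally_null U hloc
      have hgU : μ (g ⁻¹' U) = 0 := by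
        rw [← Measure.map_apply hgmeas hUopen.measurableSet]; exact hUmap
      refine measure_mono_null ?_ (measure_union_null hgU hXgnull)
      intro ω hω
      by_cases hc : X ω = g ω
      · left; show g ω ∈ U; rw [← hc]; exact hω
      · right; exact hc
    have hEZt : EZ = t₀ := part1.mpr hB0
    intro m
    by_cases hm : m 0 ≤ m 1
    · exact main m hEZt hm
    · push_neg at hm
      have hsm : (swap m) 0 ≤ (swap m) 1 := by
        rw [(hswap m).1, (hswap m).2]; linarith
      calc (∫ ω, (min ‖X ω - t₀‖ ‖swap (X ω) - t₀‖)^2 ∂μ)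
          ≤ ∫ ω, (min ‖X ω - swap m‖ ‖swap (X ω) - swap m‖)^2 ∂μ := main (swap m) hEZt hsm
        _ = ∫ ω, (min ‖X ω - m‖ ‖swap (X ω) - m‖)^2 ∂μ :=
          integral_congr_ae (Filter.Eventually.of_forall fun ω =>
            congrArg (· ^ 2) (swap_min17 hswap m (X ω)).symm)
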